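/- Let S and A be finite sets, γ ∈ [0,1), d₀ a probability distribution on S, and let M and M' be two MDPs sharing S, A, γ, d₀ with transition functions P and P'. If there exists ε_P ≥ 0 such that for all s ∈ S and a ∈ A, ∑_{s'∈S} |P(s'|s,a) − P'(s'|s,a)| ≤ ε_P, then for every policy π, ∑_{s∈S} |d^π(s, M) − d^π(s, M')| ≤ γ·(1−γ)^{-1}·ε_P. -/

import Mathlib

open scoped BigOperators

/-- The distribution over states at time `t` when running policy `pol` in an MDP
with transition function `P` and start-state distribution `d0`. -/
noncomputable def stateDist {S A : Type*} [Fintype S] [Fintype A]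
    (P : S → A → S → ℝ) (pol : S → A → ℝ) (d0 : S → ℝ) : ℕ → S → ℝ
  | 0 => d0
  | (t + 1) => fun s' => ∑ s : S, ∑ a : A, stateDist P pol d0 t s * pol s a * P s a s'

/-- The performance `ρ(π, M) = ∑_{t=0}^∞ γ^t E[R(S_t, A_t)]`. -/
noncomputable def perf {S A : Type*} [Fintype S] [Fintype A]
    (P : S → A → S → ℝ) (R : S → A → ℝ) (pol : S → A → ℝ)
    (d0 : S → ℝ) (γ : ℝ) : ℝ :=
  ∑' t : ℕ, γ ^ t * ∑ s : S, stateDist P pol d0 t s * ∑ a : A, pol s a * R s a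

/-- `P s a : S → ℝ` is a probability distribution over next states for each `(s, a)`. -/
def IsTransition {S A : Type*} [Fintype S] (P : S → A → S → ℝ) : Prop :=
  ∀ s a, (∀ s', 0 ≤ P s a s') ∧ ∑ s' : S, P s a s' = 1

/-- `pol s : A → ℝ` is a probability distribution over actions for each state `s`. -/
def IsPolicy {S A : Type*} [Fintype A] (pol : S → A → ℝ) : Prop :=
  ∀ s, (∀ a, 0 ≤ pol s a) ∧ ∑ a : A, pol s a = 1

/-- `d0` is a probability distribution over states. -/
def IsDist {S : Type*} [Fintype S] (d0 : S → ℝ) : Prop :=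
  (∀ s, 0 ≤ d0 s) ∧ ∑ s : S, d0 s = 1


/-- The discounted state occupancy `d^π(s, M) := (1−γ) ∑_{t=0}^∞ γ^t Pr(S_t = s)`. -/
noncomputable def occupancy {S A : Type*} [Fintype S] [Fintype A]
    (P : S → A → S → ℝ) (pol : S → A → ℝ) (d0 : S → ℝ) (γ : ℝ) (s : S) : ℝ :=
  (1 - γ) * ∑' t : ℕ, γ ^ t * stateDist P pol d0 t s

lemma stateDist_nonneg {S A : Type*} [Fintype S] [Fintype A]
    {P : S → A → S → ℝ} {pol : S → A → ℝ} {d0 : S → ℝ}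
    (hP : IsTransition P) (hpol : IsPolicy pol) (hd0 : IsDist d0) :
    ∀ t s, 0 ≤ stateDist P pol d0 t s := by
  intro t
  induction t with
  | zero => exact hd0.1
  | succ t ih =>
    intro s'
    simp only [stateDist]
    refine Finset.sum_nonneg fun s _ => Finset.sum_nonneg fun a _ => ?_
    exact mul_nonneg (mul_nonneg (ih s) ((hpol s).1 a)) ((hP s a).1 s')

lemma stateDist_sum_one {S A : Type*} [Fintype S] [Fintype A]
    {P : S → A → S → ℝ} {pol : S → A → ℝ} {d0 : S → ℝ}
    (hP : IsTransition P) (hpol : IsPolicy pol) (hd0 : IsDist d0) :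
    ∀ t, ∑ s : S, stateDist P pol d0 t s = 1 := by
  intro t
  induction t with
  | zero => exact hd0.2
  | succ t ih =>
    simp only [stateDist]
    rw [Finset.sum_comm]
    calc ∑ s : S, ∑ s' : S, ∑ a : A, stateDist P pol d0 t s * pol s a * P s a s'
        = ∑ s : S, ∑ a : A, ∑ s' : S, stateDist P pol d0 t s * pol s a * P s a s' := by
          exact Finset.sum_congr rfl fun s _ => Finset.sum_comm
      _ = ∑ s : S, ∑ a : A, stateDist P pol d0 t s * pol s a := by
          refine Finset.sum_congr rfl fun s _ => Finset.sum_congr rfl fun a _ => ?_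
          rw [← Finset.mul_sum, (hP s a).2, mul_one]
      _ = ∑ s : S, stateDist P pol d0 t s := by
          refine Finset.sum_congr rfl fun s _ => ?_
          rw [← Finset.mul_sum, (hpol s).2, mul_one]
      _ = 1 := ih

lemma stateDist_le_one {S A : Type*} [Fintype S] [Fintype A]
    {P : S → A → S → ℝ} {pol : S → A → ℝ} {d0 : S → ℝ}
    (hP : IsTransition P) (hpol : IsPolicy pol) (hd0 : IsDist d0) (t : ℕ) (s : S) :
    stateDist P pol d0 t s ≤ 1 := by
  rw [← stateDist_sum_one hP hpol hd0 t]
  exact Finset.single_le_sum (fun s _ => stateDist_nonneg hP hpol hd0 t s)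
    (Finset.mem_univ s)

lemma stateDist_l1_bound {S A : Type*} [Fintype S] [Fintype A]
    {εP : ℝ} (hεP : 0 ≤ εP)
    {d0 : S → ℝ} (hd0 : IsDist d0)
    {P P' : S → A → S → ℝ}
    (hP : IsTransition P) (hP' : IsTransition P')
    (hPclose : ∀ s a, ∑ s' : S, |P s a s' - P' s a s'| ≤ εP)
    {pol : S → A → ℝ} (hpol : IsPolicy pol) :
    ∀ t, ∑ s : S, |stateDist P pol d0 t s - stateDist P' pol d0 t s| ≤ t * εP := by
  intro t
  induction t with
  | zero => simp [stateDist]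
  | succ t ih =>
    have key : ∀ s' : S, |stateDist P pol d0 (t+1) s' - stateDist P' pol d0 (t+1) s'| ≤
        ∑ s : S, ∑ a : A,
          (|stateDist P pol d0 t s - stateDist P' pol d0 t s| * pol s a * P s a s'
            + stateDist P' pol d0 t s * pol s a * |P s a s' - P' s a s'|) := by
      intro s'
      simp only [stateDist]
      rw [← Finset.sum_sub_distrib]
      refine (Finset.abs_sum_le_sum_abs _ _).trans (Finset.sum_le_sum fun s _ => ?_)
      rw [← Finset.sum_sub_distrib]
      refine (Finset.abs_sum_le_sum_abs _ _).trans (Finset.sum_le_sum fun a _ => ?_)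
      have : stateDist P pol d0 t s * pol s a * P s a s'
          - stateDist P' pol d0 t s * pol s a * P' s a s'
          = (stateDist P pol d0 t s - stateDist P' pol d0 t s) * pol s a * P s a s'
            + stateDist P' pol d0 t s * pol s a * (P s a s' - P' s a s') := by ring
      rw [this]
      refine (abs_add_le _ _).trans ?_
      simp only [abs_mul, abs_of_nonneg ((hpol s).1 a), abs_of_nonneg ((hP s a).1 s'),
        abs_of_nonneg (stateDist_nonneg hP' hpol hd0 t s)]
      exact le_rfl
    calc ∑ s' : S, |stateDist P pol d0 (t+1) s' - stateDist P' pol d0 (t+1) s'|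
        ≤ ∑ s' : S, ∑ s : S, ∑ a : A,
          (|stateDist P pol d0 t s - stateDist P' pol d0 t s| * pol s a * P s a s'
            + stateDist P' pol d0 t s * pol s a * |P s a s' - P' s a s'|) :=
          Finset.sum_le_sum fun s' _ => key s'
      _ = ∑ s : S, ∑ a : A, ∑ s' : S,
          (|stateDist P pol d0 t s - stateDist P' pol d0 t s| * pol s a * P s a s'
            + stateDist P' pol d0 t s * pol s a * |P s a s' - P' s a s'|) := by
          rw [Finset.sum_comm]
          exact Finset.sum_congr rfl fun s _ => Finset.sum_comm
      _ = ∑ s : S, ∑ a : A,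
          (|stateDist P pol d0 t s - stateDist P' pol d0 t s| * pol s a
            + stateDist P' pol d0 t s * pol s a * ∑ s' : S, |P s a s' - P' s a s'|) := by
          refine Finset.sum_congr rfl fun s _ => Finset.sum_congr rfl fun a _ => ?_
          rw [Finset.sum_add_distrib, ← Finset.mul_sum, ← Finset.mul_sum, (hP s a).2,
            mul_one]
      _ ≤ ∑ s : S, ∑ a : A,
          (|stateDist P pol d0 t s - stateDist P' pol d0 t s| * pol s a
            + stateDist P' pol d0 t s * pol s a * εP) := by
          refine Finset.sum_le_sum fun s _ => Finset.sum_le_sum fun a _ => ?_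
          gcongr
          · exact mul_nonneg (stateDist_nonneg hP' hpol hd0 t s) ((hpol s).1 a)
          · exact hPclose s a
      _ = ∑ s : S, (|stateDist P pol d0 t s - stateDist P' pol d0 t s|
            + stateDist P' pol d0 t s * εP) := by
          refine Finset.sum_congr rfl fun s _ => ?_
          rw [Finset.sum_add_distrib]
          congr 1
          · rw [← Finset.mul_sum, (hpol s).2, mul_one]
          · have : ∀ a : A, stateDist P' pol d0 t s * pol s a * εP
                = stateDist P' pol d0 t s * εP * pol s a := fun a => by ring
            simp only [this]
            rw [← Finset.mul_sum, (hpol s).2, mul_one]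
      _ = (∑ s : S, |stateDist P pol d0 t s - stateDist P' pol d0 t s|)
            + (∑ s : S, stateDist P' pol d0 t s) * εP := by
          rw [Finset.sum_add_distrib, ← Finset.sum_mul]
      _ ≤ t * εP + 1 * εP := by
          rw [stateDist_sum_one hP' hpol hd0 t]
          exact add_le_add ih le_rfl
      _ = (t + 1 : ℕ) * εP := by push_cast; ring

/-- If the transition functions of `M` and `M'` are within `εP` in L1 distance for all
state-action pairs, then for every policy the L1 distance between the discounted
state occupancies is at most `γ·(1−γ)⁻¹·εP`. -/
theorem occupancy_diff_epsilon_bound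
    {S A : Type*} [Fintype S] [Fintype A]
    (γ εP : ℝ) (hγ0 : 0 ≤ γ) (hγ1 : γ < 1) (hεP : 0 ≤ εP)
    (d0 : S → ℝ) (hd0 : IsDist d0)
    (P P' : S → A → S → ℝ)
    (hP : IsTransition P) (hP' : IsTransition P')
    (hPclose : ∀ s a, ∑ s' : S, |P s a s' - P' s a s'| ≤ εP)
    (pol : S → A → ℝ) (hpol : IsPolicy pol) :
    ∑ s : S, |occupancy P pol d0 γ s - occupancy P' pol d0 γ s| ≤
      γ * (1 - γ)⁻¹ * εP := by
  have hγn : ‖γ‖ < 1 := by rwa [Real.norm_of_nonneg hγ0]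
  have hgeo : Summable (fun t : ℕ => γ ^ t) := summable_geometric_of_lt_one hγ0 hγ1
  have hsumm : ∀ (Q : S → A → S → ℝ), IsTransition Q → ∀ s : S,
      Summable (fun t : ℕ => γ ^ t * stateDist Q pol d0 t s) := by
    intro Q hQ s
    refine Summable.of_nonneg_of_le
      (fun t => mul_nonneg (pow_nonneg hγ0 t) (stateDist_nonneg hQ hpol hd0 t s))
      (fun t => ?_) hgeo
    nlinarith [stateDist_le_one hQ hpol hd0 t s, pow_nonneg hγ0 t]
  have htmul : Summable (fun t : ℕ => (t : ℝ) * γ ^ t * εP) :=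
    ((summable_pow_mul_geometric_of_norm_lt_one 1 hγn).mul_right εP).congr
      (fun t => by push_cast; ring)
  have hΔsum : ∀ s : S,
      Summable (fun t : ℕ => γ ^ t *
        |stateDist P pol d0 t s - stateDist P' pol d0 t s|) := by
    intro s
    refine Summable.of_nonneg_of_le
      (fun t => mul_nonneg (pow_nonneg hγ0 t) (abs_nonneg _)) (fun t => ?_) htmul
    have h1 : |stateDist P pol d0 t s - stateDist P' pol d0 t s| ≤ (t : ℝ) * εP := by
      refine le_trans ?_ (stateDist_l1_bound hεP hd0 hP hP' hPclose hpol t)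
      exact Finset.single_le_sum
        (f := fun s' => |stateDist P pol d0 t s' - stateDist P' pol d0 t s'|)
        (fun s' _ => abs_nonneg _) (Finset.mem_univ s)
    calc γ ^ t * |stateDist P pol d0 t s - stateDist P' pol d0 t s|
        ≤ γ ^ t * ((t : ℝ) * εP) := by gcongr
      _ = (t : ℝ) * γ ^ t * εP := by ring
  have habs : ∀ s : S, |occupancy P pol d0 γ s - occupancy P' pol d0 γ s| ≤
      (1 - γ) * ∑' t : ℕ, γ ^ t *
        |stateDist P pol d0 t s - stateDist P' pol d0 t s| := by
    intro s
    have heq : occupancy P pol d0 γ s - occupancy P' pol d0 γ s =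
        (1 - γ) * ∑' t : ℕ, γ ^ t *
          (stateDist P pol d0 t s - stateDist P' pol d0 t s) := by
      unfold occupancy
      rw [← mul_sub, ← Summable.tsum_sub (hsumm P hP s) (hsumm P' hP' s)]
      congr 1
      exact tsum_congr fun t => by ring
    rw [heq, abs_mul, abs_of_nonneg (by linarith : (0:ℝ) ≤ 1 - γ)]
    refine mul_le_mul_of_nonneg_left ?_ (by linarith)
    have hn : Summable (fun t : ℕ =>
        ‖γ ^ t * (stateDist P pol d0 t s - stateDist P' pol d0 t s)‖) := by
      refine (hΔsum s).congr fun t => ?_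
      rw [Real.norm_eq_abs, abs_mul, abs_of_nonneg (pow_nonneg hγ0 t)]
    calc |∑' t : ℕ, γ ^ t * (stateDist P pol d0 t s - stateDist P' pol d0 t s)|
        ≤ ∑' t : ℕ, ‖γ ^ t * (stateDist P pol d0 t s - stateDist P' pol d0 t s)‖ := by
          rw [← Real.norm_eq_abs]; exact norm_tsum_le_tsum_norm hn
      _ = ∑' t : ℕ, γ ^ t * |stateDist P pol d0 t s - stateDist P' pol d0 t s| :=
          tsum_congr fun t => by
            rw [Real.norm_eq_abs, abs_mul, abs_of_nonneg (pow_nonneg hγ0 t)]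
  calc ∑ s : S, |occupancy P pol d0 γ s - occupancy P' pol d0 γ s|
      ≤ ∑ s : S, (1 - γ) * ∑' t : ℕ, γ ^ t *
          |stateDist P pol d0 t s - stateDist P' pol d0 t s| :=
        Finset.sum_le_sum fun s _ => habs s
    _ = (1 - γ) * ∑' t : ℕ, ∑ s : S, γ ^ t *
          |stateDist P pol d0 t s - stateDist P' pol d0 t s| := by
        rw [← Finset.mul_sum, Summable.tsum_finsetSum (fun s _ => hΔsum s)]
    _ ≤ (1 - γ) * ∑' t : ℕ, (t : ℝ) * γ ^ t * εP := by
        refine mul_le_mul_of_nonneg_left ?_ (by linarith)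
        refine Summable.tsum_le_tsum (fun t => ?_)
          (summable_sum fun s _ => hΔsum s) htmul
        rw [← Finset.mul_sum]
        calc γ ^ t * ∑ s : S, |stateDist P pol d0 t s - stateDist P' pol d0 t s|
            ≤ γ ^ t * ((t : ℝ) * εP) := by
              gcongr
              exact stateDist_l1_bound hεP hd0 hP hP' hPclose hpol t
          _ = (t : ℝ) * γ ^ t * εP := by ring
    _ = (1 - γ) * ((γ / (1 - γ) ^ 2) * εP) := by
        rw [tsum_mul_right, tsum_coe_mul_geometric_of_norm_lt_one hγn]
    _ = γ * (1 - γ)⁻¹ * εP := by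
        have h1 : (1:ℝ) - γ ≠ 0 := by linarith
        field_simp
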